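/- arXiv:1505.07786 — 2 statements merged into one kernel-verified Lean document; each statement's English description precedes it below -/
import Mathlib

section
/- In an objective partial group (L, Δ), for each object X ∈ Δ the set N_L(X) = {g ∈ L : X^g = X} is a subgroup of L (i.e. a partial subgroup with W(N_L(X)) ⊆ D). -/
universe u

structure PartialGroupOn (L : Type u) : Type u where
  nonempty : Nonempty L
  D : Set (List L)
  Pi : List L → L
  inv : L → L
  mem_single : ∀ x : L, [x] ∈ D
  mem_append_left : ∀ u v : List L, u ++ v ∈ D → u ∈ D
  mem_append_right : ∀ u v : List L, u ++ v ∈ D → v ∈ D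
  Pi_single : ∀ x : L, Pi [x] = x
  mem_assoc : ∀ u v w : List L, u ++ v ++ w ∈ D → u ++ [Pi v] ++ w ∈ D
  Pi_assoc : ∀ u v w : List L, u ++ v ++ w ∈ D →
    Pi (u ++ v ++ w) = Pi (u ++ [Pi v] ++ w)
  inv_inv : ∀ x : L, inv (inv x) = x
  mem_inv : ∀ w ∈ D, (w.reverse.map inv) ++ w ∈ D
  Pi_inv : ∀ w ∈ D, Pi ((w.reverse.map inv) ++ w) = Pi []

namespace PartialGroupOn

variable {L : Type u} (M : PartialGroupOn L)

/-- The inverse of a word: reverse the word and invert each entry. -/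
def wordInv (w : List L) : List L := w.reverse.map M.inv

/-- The identity element `1 = Π(∅)`. -/
def one : L := M.Pi []

/-- Conjugation `x ↦ x^g = Π(g⁻¹, x, g)`. -/
def conj (x g : L) : L := M.Pi [M.inv g, x, g]

/-- `D(g)` is the set of `x` for which `x^g` is defined. -/
def Dg (g : L) : Set L := {x | [M.inv g, x, g] ∈ M.D}

/-- A partial subgroup: a nonempty subset closed under inversion and under the
product applied to words in `D` with entries in the subset. -/
def IsPartialSubgroup (H : Set L) : Prop :=
  H.Nonempty ∧ (∀ x ∈ H, M.inv x ∈ H) ∧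
    ∀ w : List L, (∀ x ∈ w, x ∈ H) → w ∈ M.D → M.Pi w ∈ H

/-- A partial normal subgroup of `L`. -/
def IsPartialNormal (N : Set L) : Prop :=
  M.IsPartialSubgroup N ∧
    ∀ x ∈ N, ∀ g : L, [M.inv g, x, g] ∈ M.D → M.conj x g ∈ N

/-- A subgroup of `L`: a partial subgroup `H` with `W(H) ⊆ D`. -/
def IsSubgroup (H : Set L) : Prop :=
  M.IsPartialSubgroup H ∧ ∀ w : List L, (∀ x ∈ w, x ∈ H) → w ∈ M.D

/-- `X ⊆ D(g)`, i.e. `X^g` is defined. -/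
def setConjDef (X : Set L) (g : L) : Prop := ∀ x ∈ X, [M.inv g, x, g] ∈ M.D

/-- The conjugate set `X^g`. -/
def setConj (X : Set L) (g : L) : Set L := {y | ∃ x ∈ X, y = M.conj x g}

/-- `viaChain Δ w X` says that `w = (g₁,…,gₙ)` is in `D` via the chain
`X = X₀, X₁ = X₀^{g₁}, …` of members of `Δ`. -/
def viaChain (Δ : Set (Set L)) : List L → Set L → Prop
  | [], X => X ∈ Δ
  | g :: w, X => X ∈ Δ ∧ M.setConjDef X g ∧ viaChain Δ w (M.setConj X g)

/-- `(L, Δ)` is an objective partial group: every member of `Δ` is a subgroup,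
(O1) `D = D_Δ`, and (O2) the overgroup-closure condition. -/
def Objective (Δ : Set (Set L)) : Prop :=
  (∀ X ∈ Δ, M.IsSubgroup X) ∧
  (M.D = {w | ∃ X : Set L, M.viaChain Δ w X}) ∧
  (∀ X ∈ Δ, ∀ Y ∈ Δ, ∀ g : L, M.setConjDef X g → M.IsSubgroup (M.setConj X g) →
    M.setConj X g ⊆ Y →
    ∀ Z : Set L, M.IsSubgroup Z → M.setConj X g ⊆ Z → Z ⊆ Y → Z ∈ Δ)

/-- The normalizer `N_L(X) = {g : X^g = X}`. -/
def normalizer (X : Set L) : Set L := {g | M.setConjDef X g ∧ M.setConj X g = X}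

/-- `S_g = {x ∈ D(g) ∩ S : x^g ∈ S}`. -/
def Sg (S : Set L) (g : L) : Set L :=
  {x | x ∈ S ∧ [M.inv g, x, g] ∈ M.D ∧ M.conj x g ∈ S}

/-- `S_w`: the set of `x ∈ S` successively conjugated into `S` by the entries
of the word `w`. -/
def Sw (S : Set L) : List L → Set L
  | [] => S
  | g :: w => {x | x ∈ S ∧ [M.inv g, x, g] ∈ M.D ∧ M.conj x g ∈ Sw S w}

/-- A `p`-subgroup: a subgroup whose cardinality is a power of `p`. -/
def IsPSubgroup (p : ℕ) (H : Set L) : Prop :=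
  M.IsSubgroup H ∧ ∃ n : ℕ, Nat.card H = p ^ n

/-- `(L, Δ, S)` is a locality. -/
def IsLocality (p : ℕ) (Δ : Set (Set L)) (S : Set L) : Prop :=
  p.Prime ∧ Finite L ∧ S ∈ Δ ∧ (∀ X ∈ Δ, X ⊆ S) ∧ M.Objective Δ ∧
    M.IsPSubgroup p S ∧
    ∀ H : Set L, M.IsPSubgroup p H → S ⊆ H → H = S

/-- The product set `XY` of two subsets of `L`. -/
def setProd (X Y : Set L) : Set L :=
  {z | ∃ a ∈ X, ∃ b ∈ Y, [a, b] ∈ M.D ∧ z = M.Pi [a, b]}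

/-- A homomorphism of partial groups. -/
def IsHom {L' : Type u} (M' : PartialGroupOn L') (β : L → L') : Prop :=
  (∀ w ∈ M.D, w.map β ∈ M'.D) ∧ ∀ w ∈ M.D, β (M.Pi w) = M'.Pi (w.map β)

end PartialGroupOn

open PartialGroupOn

namespace PGAux

variable {L : Type u} (M : PartialGroupOn L)

lemma nil_mem : ([] : List L) ∈ M.D := by
  obtain ⟨x⟩ := M.nonempty
  exact M.mem_append_left [] [x] (by simpa using M.mem_single x)

lemma one_cons_mem {w : List L} (h : w ∈ M.D) : (M.one :: w) ∈ M.D := by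
  simpa [PartialGroupOn.one] using M.mem_assoc [] [] w (by simpa using h)

lemma Pi_one_cons {w : List L} (h : w ∈ M.D) : M.Pi (M.one :: w) = M.Pi w := by
  have := M.Pi_assoc [] [] w (by simpa using h)
  simp only [List.cons_append, List.singleton_append, List.nil_append, List.append_nil] at this
  exact this.symm

lemma concat_one_mem {w : List L} (h : w ∈ M.D) : w ++ [M.one] ∈ M.D := by
  simpa [PartialGroupOn.one] using M.mem_assoc w [] [] (by simpa using h)

lemma Pi_concat_one {w : List L} (h : w ∈ M.D) : M.Pi (w ++ [M.one]) = M.Pi w := by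
  have := M.Pi_assoc w [] [] (by simpa using h)
  simp only [List.cons_append, List.singleton_append, List.nil_append, List.append_nil] at this
  exact this.symm

lemma prod_pair_mem {u v : List L} (h : u ++ v ∈ M.D) : [M.Pi u, M.Pi v] ∈ M.D := by
  have h1 := M.mem_assoc [] u v (by simpa using h)
  simp only [List.nil_append] at h1
  have h2 := M.mem_assoc [M.Pi u] v [] (by simpa using h1)
  simpa using h2

lemma Pi_append {u v : List L} (h : u ++ v ∈ M.D) :
    M.Pi (u ++ v) = M.Pi [M.Pi u, M.Pi v] := by
  have h0 := M.Pi_assoc [] u v (by simpa using h)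
  simp only [List.nil_append] at h0
  have h1 := M.mem_assoc [] u v (by simpa using h)
  simp only [List.nil_append] at h1
  have h2 := M.Pi_assoc [M.Pi u] v [] (by simpa using h1)
  simp only [List.append_nil, List.singleton_append] at h2
  rw [h0]
  simpa using h2

lemma invg_g_mem (g : L) : [M.inv g, g] ∈ M.D := by
  simpa using M.mem_inv [g] (M.mem_single g)

lemma Pi_invg_g (g : L) : M.Pi [M.inv g, g] = M.one := by
  simpa [PartialGroupOn.one] using M.Pi_inv [g] (M.mem_single g)

lemma g_invg_mem (g : L) : [g, M.inv g] ∈ M.D := by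
  have := invg_g_mem M (M.inv g)
  rwa [M.inv_inv] at this

lemma Pi_g_invg (g : L) : M.Pi [g, M.inv g] = M.one := by
  have := Pi_invg_g M (M.inv g)
  rwa [M.inv_inv] at this

lemma eq_inv_of_pair {x y : L} (h : [x, y] ∈ M.D) (hp : M.Pi [x, y] = M.one) :
    y = M.inv x := by
  have hA := M.mem_inv [x, y] h
  simp only [List.reverse_cons, List.reverse_nil, List.nil_append, List.map_append,
    List.map_cons, List.map_nil] at hA
  -- hA : [inv y, inv x, x, y] ∈ D
  have h3 : [M.inv x, x, y] ∈ M.D :=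
    M.mem_append_right [M.inv y] [M.inv x, x, y] (by simpa using hA)
  have e1 : M.Pi [M.inv x, x, y] = M.inv x := by
    have := M.Pi_assoc [M.inv x] [x, y] [] (by simpa using h3)
    simp only [List.cons_append, List.singleton_append, List.nil_append, List.append_nil] at this
    rw [this, hp]
    rw [show [M.inv x, M.one] = [M.inv x] ++ [M.one] by simp,
      Pi_concat_one M (M.mem_single _), M.Pi_single]
  have e2 : M.Pi [M.inv x, x, y] = y := by
    have := M.Pi_assoc [] [M.inv x, x] [y] (by simpa using h3)
    simp only [List.cons_append, List.singleton_append, List.nil_append, List.append_nil] at this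
    rw [this, Pi_invg_g M x, Pi_one_cons M (M.mem_single y), M.Pi_single]
  rw [← e1, e2]

lemma Pi_wordInv {w : List L} (h : w ∈ M.D) :
    M.Pi (w.reverse.map M.inv) = M.inv (M.Pi w) := by
  have hm := M.mem_inv w h
  have hp := M.Pi_inv w h
  have h2 := prod_pair_mem M hm
  have h3 : M.Pi [M.Pi (w.reverse.map M.inv), M.Pi w] = M.one := by
    rw [← Pi_append M hm, hp]; rfl
  have := eq_inv_of_pair M h2 h3
  rw [this, M.inv_inv]

lemma inv_one : M.inv M.one = M.one := by
  have h1 : M.Pi [M.inv M.one, M.one] = M.one := Pi_invg_g M M.one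
  have h2 : M.Pi [M.inv M.one, M.one] = M.inv M.one := by
    rw [show [M.inv M.one, M.one] = [M.inv M.one] ++ [M.one] by simp,
      Pi_concat_one M (M.mem_single _), M.Pi_single]
  rw [← h2, h1]

lemma conj_invertible {g x : L} (h : [M.inv g, x, g] ∈ M.D) :
    [g, M.conj x g, M.inv g] ∈ M.D ∧ M.Pi [g, M.conj x g, M.inv g] = x := by
  have hA : [M.inv g, M.inv x, g, M.inv g, x, g] ∈ M.D := by
    have := M.mem_inv _ h
    simpa [M.inv_inv] using this
  have hB : [M.inv g, M.inv x, g, M.inv g] ∈ M.D :=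
    M.mem_append_left [M.inv g, M.inv x, g, M.inv g] [x, g] (by simpa using hA)
  have hC := M.mem_inv _ hB
  simp only [List.reverse_cons, List.reverse_nil, List.nil_append, List.map_append,
    List.map_cons, List.map_nil, M.inv_inv] at hC
  -- hC : [g, inv g, x, g, inv g, inv x, g, inv g] ∈ D  (as appends)
  have hDm : [g, M.inv g, x, g, M.inv g] ∈ M.D :=
    M.mem_append_left [g, M.inv g, x, g, M.inv g] [M.inv x, g, M.inv g] (by simpa using hC)
  have hE : [g, M.Pi [M.inv g, x, g], M.inv g] ∈ M.D := by
    simpa using M.mem_assoc [g] [M.inv g, x, g] [M.inv g] (by simpa using hDm)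
  have hF : M.Pi [g, M.inv g, x, g, M.inv g] = M.Pi [g, M.Pi [M.inv g, x, g], M.inv g] := by
    simpa using M.Pi_assoc [g] [M.inv g, x, g] [M.inv g] (by simpa using hDm)
  have hs : [x, g, M.inv g] ∈ M.D :=
    M.mem_append_right [g, M.inv g] [x, g, M.inv g] (by simpa using hDm)
  have g1 : M.Pi [g, M.inv g, x, g, M.inv g] = M.Pi (M.one :: [x, g, M.inv g]) := by
    have := M.Pi_assoc [] [g, M.inv g] [x, g, M.inv g] (by simpa using hDm)
    simp only [List.cons_append, List.singleton_append, List.nil_append, List.append_nil] at this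
    rw [this, Pi_g_invg M g]
  have g2 : M.Pi [x, g, M.inv g] = M.Pi [x, M.one] := by
    have := M.Pi_assoc [x] [g, M.inv g] [] (by simpa using hs)
    simp only [List.cons_append, List.singleton_append, List.nil_append, List.append_nil] at this
    rw [this, Pi_g_invg M g]
  have g3 : M.Pi [x, M.one] = x := by
    rw [show [x, M.one] = [x] ++ [M.one] by simp,
      Pi_concat_one M (M.mem_single x), M.Pi_single]
  refine ⟨hE, ?_⟩
  rw [show M.conj x g = M.Pi [M.inv g, x, g] from rfl, ← hF, g1,
    Pi_one_cons M hs, g2, g3]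

end PGAux
namespace PGAux

variable {L : Type u} (M : PartialGroupOn L)

lemma mem_norm {X : Set L} {g : L} (h : M.setConjDef X g) (h2 : M.setConj X g = X) :
    g ∈ M.normalizer X := ⟨h, h2⟩

lemma norm_def {X : Set L} {g : L} (h : g ∈ M.normalizer X) :
    M.setConjDef X g ∧ M.setConj X g = X := h

lemma viaChain_const {Δ : Set (Set L)} {X : Set L} (hX : X ∈ Δ) :
    ∀ w : List L, (∀ g ∈ w, g ∈ M.normalizer X) → M.viaChain Δ w X := by
  intro w
  induction w with
  | nil => intro _; exact hX
  | cons g u ih =>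
    intro h
    have hg := norm_def M (h g (by simp))
    refine ⟨hX, hg.1, ?_⟩
    rw [hg.2]
    exact ih (fun a ha => h a (by simp [ha]))

end PGAux

open PGAux

variable {L : Type u}

theorem normalizer_isSubgroup (M : PartialGroupOn L) (Δ : Set (Set L))
    (hobj : M.Objective Δ) (X : Set L) (hX : X ∈ Δ) :
    M.IsSubgroup (M.normalizer X) := by
  obtain ⟨hΔ, hDeq, -⟩ := hobj
  obtain ⟨⟨hne, hinvX, hprodX⟩, hallX⟩ := hΔ X hX
  -- any word with entries in the normalizer is in D
  have memD : ∀ w : List L, (∀ g ∈ w, g ∈ M.normalizer X) → w ∈ M.D := by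
    intro w hw
    rw [hDeq]
    exact ⟨X, viaChain_const M hX w hw⟩
  -- X is contained in its normalizer
  have hXN : ∀ y ∈ X, y ∈ M.normalizer X := by
    intro y hy
    have hyi : M.inv y ∈ X := hinvX y hy
    have hwords : ∀ z ∈ X, [M.inv y, z, y] ∈ M.D := by
      intro z hz
      refine hallX [M.inv y, z, y] ?_
      intro a ha
      simp only [List.mem_cons, List.not_mem_nil, or_false] at ha
      rcases ha with rfl | rfl | rfl
      · exact hyi
      · exact hz
      · exact hy
    refine mem_norm M hwords ?_
    apply Set.Subset.antisymm
    · rintro - ⟨z, hz, rfl⟩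
      exact hprodX [M.inv y, z, y] (by
        intro a ha
        simp only [List.mem_cons, List.not_mem_nil, or_false] at ha
        rcases ha with rfl | rfl | rfl
        · exact hyi
        · exact hz
        · exact hy) (hwords z hz)
    · intro z hz
      have hyz : [M.inv (M.inv y), z, M.inv y] ∈ M.D := by
        rw [M.inv_inv]
        refine hallX [y, z, M.inv y] ?_
        intro a ha
        simp only [List.mem_cons, List.not_mem_nil, or_false] at ha
        rcases ha with rfl | rfl | rfl
        · exact hy
        · exact hz
        · exact hyi
      obtain ⟨hmem, hpi⟩ := conj_invertible M hyz
      have hu : M.conj z (M.inv y) ∈ X := by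
        show M.Pi [M.inv (M.inv y), z, M.inv y] ∈ X
        rw [M.inv_inv]
        refine hprodX [y, z, M.inv y] ?_ ?_
        · intro a ha
          simp only [List.mem_cons, List.not_mem_nil, or_false] at ha
          rcases ha with rfl | rfl | rfl
          · exact hy
          · exact hz
          · exact hyi
        · have := hyz
          rwa [M.inv_inv] at this
      refine ⟨M.conj z (M.inv y), hu, ?_⟩
      rw [M.inv_inv] at hpi
      exact hpi.symm
  -- the normalizer is nonempty
  have hNne : (M.normalizer X).Nonempty := by
    obtain ⟨y, hy⟩ := hne
    exact ⟨y, hXN y hy⟩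
  -- the normalizer is closed under inversion
  have hNinv : ∀ g ∈ M.normalizer X, M.inv g ∈ M.normalizer X := by
    intro g hg
    obtain ⟨hgd, hgc⟩ := norm_def M hg
    have main : ∀ x ∈ X, [M.inv (M.inv g), M.conj x g, M.inv g] ∈ M.D ∧
        M.conj (M.conj x g) (M.inv g) = x := by
      intro x hx
      obtain ⟨hm, hp⟩ := conj_invertible M (hgd x hx)
      constructor
      · rw [M.inv_inv]; exact hm
      · show M.Pi [M.inv (M.inv g), M.conj x g, M.inv g] = x
        rw [M.inv_inv]; exact hp
    refine mem_norm M ?_ ?_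
    · intro y hy
      have : y ∈ M.setConj X g := by rw [hgc]; exact hy
      obtain ⟨x, hx, rfl⟩ := this
      exact (main x hx).1
    · apply Set.Subset.antisymm
      · rintro - ⟨y, hy, rfl⟩
        have : y ∈ M.setConj X g := by rw [hgc]; exact hy
        obtain ⟨x, hx, rfl⟩ := this
        rw [(main x hx).2]
        exact hx
      · intro x hx
        have hcg : M.conj x g ∈ X := by
          rw [← hgc]; exact ⟨x, hx, rfl⟩
        exact ⟨M.conj x g, hcg, ((main x hx).2).symm⟩
  -- conjugation of an element of X by a word with entries in the normalizer
  -- lands in X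
  have conjw : ∀ w : List L, (∀ g ∈ w, g ∈ M.normalizer X) → ∀ x ∈ X,
      M.Pi (w.reverse.map M.inv ++ [x] ++ w) ∈ X := by
    intro w
    induction w with
    | nil =>
      intro _ x hx
      simpa [M.Pi_single] using hx
    | cons g u ih =>
      intro hw x hx
      have hg := norm_def M (hw g (by simp))
      have hu : ∀ a ∈ u, a ∈ M.normalizer X := fun a ha => hw a (by simp [ha])
      have hxg : M.conj x g ∈ X := by
        rw [← hg.2]; exact ⟨x, hx, rfl⟩
      have hD1 : u.reverse.map M.inv ++ [M.inv g, x, g] ++ u ∈ M.D := by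
        refine memD _ ?_
        intro a ha
        simp only [List.mem_append, List.mem_map, List.mem_reverse, List.mem_cons,
          List.not_mem_nil, or_false] at ha
        rcases ha with (⟨b, hb, rfl⟩ | h1 | h1 | h1) | ha
        · exact hNinv b (hu b hb)
        · exact h1 ▸ hNinv g (hw g (by simp))
        · exact h1 ▸ hXN x hx
        · exact h1 ▸ hw g (by simp)
        · exact hu a ha
      have hPeq := M.Pi_assoc (u.reverse.map M.inv) [M.inv g, x, g] u hD1
      have hlist : (g :: u).reverse.map M.inv ++ [x] ++ (g :: u)
          = u.reverse.map M.inv ++ [M.inv g, x, g] ++ u := by simp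
      rw [hlist, hPeq]
      exact ih hu (M.conj x g) hxg
  -- definedness and formula for conjugation by Π w
  have step : ∀ v : List L, (∀ g ∈ v, g ∈ M.normalizer X) → ∀ x ∈ X,
      [M.inv (M.Pi v), x, M.Pi v] ∈ M.D ∧
        M.conj x (M.Pi v) = M.Pi (v.reverse.map M.inv ++ [x] ++ v) := by
    intro v hv x hx
    have hvD : v ∈ M.D := memD v hv
    have hvinv : ∀ a ∈ v.reverse.map M.inv, a ∈ M.normalizer X := by
      intro a ha
      simp only [List.mem_map, List.mem_reverse] at ha
      obtain ⟨b, hb, rfl⟩ := ha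
      exact hNinv b (hv b hb)
    have hfull : v.reverse.map M.inv ++ [x] ++ v ∈ M.D := by
      refine memD _ ?_
      intro a ha
      simp only [List.mem_append, List.mem_cons, List.not_mem_nil, or_false] at ha
      rcases ha with (ha | h1) | ha
      · exact hvinv a ha
      · exact h1 ▸ hXN x hx
      · exact hv a ha
    have hPIinv : M.Pi (v.reverse.map M.inv) = M.inv (M.Pi v) := Pi_wordInv M hvD
    have h1 := M.mem_assoc [] (v.reverse.map M.inv) ([x] ++ v)
      (by simpa [List.append_assoc] using hfull)
    simp only [List.nil_append] at h1
    -- h1 : [Pi v⁻¹] ++ [x] ++ v ∈ D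
    have h1' : [M.Pi (v.reverse.map M.inv), x] ++ v ∈ M.D := by
      simpa [List.append_assoc] using h1
    have h2 := M.mem_assoc [M.Pi (v.reverse.map M.inv), x] v [] (by simpa using h1')
    simp only [List.append_nil, List.cons_append, List.singleton_append, List.nil_append] at h2
    have p1 := M.Pi_assoc [] (v.reverse.map M.inv) ([x] ++ v)
      (by simpa [List.append_assoc] using hfull)
    simp only [List.nil_append, List.cons_append, List.singleton_append] at p1
    have p2 := M.Pi_assoc [M.Pi (v.reverse.map M.inv), x] v [] (by simpa using h1')
    simp only [List.append_nil, List.cons_append, List.singleton_append, List.nil_append] at p2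
    constructor
    · rw [← hPIinv]; exact h2
    · show M.Pi [M.inv (M.Pi v), x, M.Pi v] = _
      rw [← hPIinv, ← p2, ← p1]
      simp
  -- closure under products
  have hNprod : ∀ w : List L, (∀ g ∈ w, g ∈ M.normalizer X) → M.Pi w ∈ M.normalizer X := by
    intro w hw
    have hwD : w ∈ M.D := memD w hw
    have hPIinv : M.Pi (w.reverse.map M.inv) = M.inv (M.Pi w) := Pi_wordInv M hwD
    have hwinv : ∀ a ∈ w.reverse.map M.inv, a ∈ M.normalizer X := by
      intro a ha
      simp only [List.mem_map, List.mem_reverse] at ha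
      obtain ⟨b, hb, rfl⟩ := ha
      exact hNinv b (hw b hb)
    refine mem_norm M (fun x hx => (step w hw x hx).1) ?_
    apply Set.Subset.antisymm
    · rintro - ⟨x, hx, rfl⟩
      rw [(step w hw x hx).2]
      exact conjw w hw x hx
    · intro z hz
      have hstep := step (w.reverse.map M.inv) hwinv z hz
      have hxX : M.conj z (M.Pi (w.reverse.map M.inv)) ∈ X := by
        rw [hstep.2]
        exact conjw (w.reverse.map M.inv) hwinv z hz
      obtain ⟨hm, hp⟩ := conj_invertible M hstep.1
      rw [hPIinv] at hxX hp
      rw [M.inv_inv] at hp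
      exact ⟨M.conj z (M.inv (M.Pi w)), hxX, hp.symm⟩
  exact ⟨⟨hNne, hNinv, fun w hw _ => hNprod w hw⟩, memD⟩
end

section
/- In an objective partial group (L, Δ), if g ∈ L and X ∈ Δ with Y := X^g ∈ Δ, then N_L(X) ⊆ D(g) and conjugation c_g : N_L(X) → N_L(Y) is an isomorphism of groups. -/
universe u

section Basics

namespace PartialGroupOn

variable {L : Type u} (M : PartialGroupOn L)

theorem mem_nil' : ([] : List L) ∈ M.D := by
  obtain ⟨x⟩ := M.nonempty
  exact M.mem_append_right [x] [] (M.mem_single x)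

theorem inv_pair_right (q : L) :
    [q, M.inv q] ∈ M.D ∧ M.Pi [q, M.inv q] = M.Pi [] := by
  have h := M.mem_inv [M.inv q] (M.mem_single _)
  have h2 := M.Pi_inv [M.inv q] (M.mem_single _)
  have e : (([M.inv q] : List L).reverse.map M.inv) ++ [M.inv q] = [q, M.inv q] := by
    simp [M.inv_inv]
  rw [e] at h h2
  exact ⟨h, h2⟩

theorem inv_pair_left (q : L) :
    [M.inv q, q] ∈ M.D ∧ M.Pi [M.inv q, q] = M.Pi [] := by
  have h := M.mem_inv [q] (M.mem_single _)
  have h2 := M.Pi_inv [q] (M.mem_single _)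
  have e : (([q] : List L).reverse.map M.inv) ++ [q] = [M.inv q, q] := by simp
  rw [e] at h h2
  exact ⟨h, h2⟩

theorem conj_invol {g x : L} (h : [M.inv g, x, g] ∈ M.D) :
    [M.inv (M.inv g), M.conj x g, M.inv g] ∈ M.D ∧
      M.conj (M.conj x g) (M.inv g) = x := by
  have h3 := M.mem_inv _ h
  have e3 : (([M.inv g, x, g] : List L).reverse.map M.inv) ++ [M.inv g, x, g]
      = [M.inv g, M.inv x, g, M.inv g, x, g] := by simp [M.inv_inv]
  rw [e3] at h3
  have h4 := M.mem_append_right [M.inv g, M.inv x] [g, M.inv g, x, g] h3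
  have h5' := M.mem_inv _ h4
  have e5 : (([g, M.inv g, x, g] : List L).reverse.map M.inv) ++ [g, M.inv g, x, g]
      = [M.inv g, M.inv x, g, M.inv g] ++ [g, M.inv g, x, g] := by simp [M.inv_inv]
  rw [e5] at h5'
  have h5 := M.mem_append_left [M.inv g, M.inv x, g, M.inv g] [g, M.inv g, x, g] h5'
  have h6' := M.mem_inv _ h5
  have e6 : (([M.inv g, M.inv x, g, M.inv g] : List L).reverse.map M.inv)
      ++ [M.inv g, M.inv x, g, M.inv g]
      = [g, M.inv g, x, g, M.inv g] ++ [M.inv x, g, M.inv g] := by simp [M.inv_inv]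
  rw [e6] at h6'
  have h6 := M.mem_append_left [g, M.inv g, x, g, M.inv g] [M.inv x, g, M.inv g] h6'
  have hm : [g, M.Pi [M.inv g, x, g], M.inv g] ∈ M.D :=
    M.mem_assoc [g] [M.inv g, x, g] [M.inv g] h6
  have hpe : M.Pi [g, M.inv g, x, g, M.inv g] = M.Pi [g, M.Pi [M.inv g, x, g], M.inv g] :=
    M.Pi_assoc [g] [M.inv g, x, g] [M.inv g] h6
  have hqe : M.Pi [g, M.inv g, x, g, M.inv g] = M.Pi [M.Pi [g, M.inv g], x, g, M.inv g] :=
    M.Pi_assoc [] [g, M.inv g] [x, g, M.inv g] h6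
  have hxg : [x, g, M.inv g] ∈ M.D := M.mem_append_right [g, M.inv g] [x, g, M.inv g] h6
  have e7 : M.Pi [x, g, M.inv g] = M.Pi [M.Pi [], x, g, M.inv g] := by
    have := M.Pi_assoc [] [] [x, g, M.inv g] hxg
    exact this
  have e8 : M.Pi [x, g, M.inv g] = M.Pi [x, M.Pi [g, M.inv g]] :=
    M.Pi_assoc [x] [g, M.inv g] [] hxg
  have e9 : M.Pi [x] = M.Pi [x, M.Pi []] := M.Pi_assoc [x] [] [] (M.mem_single x)
  have v1 : M.Pi [g, M.inv g, x, g, M.inv g] = x := by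
    rw [hqe, (M.inv_pair_right g).2, ← e7, e8, (M.inv_pair_right g).2, ← e9, M.Pi_single]
  have v2 : M.Pi [g, M.Pi [M.inv g, x, g], M.inv g] = x := by rw [← hpe]; exact v1
  constructor
  · show [M.inv (M.inv g), M.Pi [M.inv g, x, g], M.inv g] ∈ M.D
    rw [M.inv_inv]; exact hm
  · show M.Pi [M.inv (M.inv g), M.Pi [M.inv g, x, g], M.inv g] = x
    rw [M.inv_inv]; exact v2

theorem pi_pair_eq_inv {p q : L} (h : [p, q] ∈ M.D) (h1 : M.Pi [p, q] = M.Pi []) :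
    p = M.inv q := by
  have hw := M.mem_inv _ h
  have e : (([p, q] : List L).reverse.map M.inv) ++ [p, q] = [M.inv q, M.inv p, p, q] := by
    simp
  rw [e] at hw
  have h2 := M.mem_append_left [M.inv q, M.inv p] [p, q] hw
  have hw2 := M.mem_inv _ h2
  have e2 : (([M.inv q, M.inv p] : List L).reverse.map M.inv) ++ [M.inv q, M.inv p]
      = [p, q] ++ [M.inv q, M.inv p] := by simp [M.inv_inv]
  rw [e2] at hw2
  have h3 : [p, q, M.inv q] ∈ M.D := M.mem_append_left [p, q, M.inv q] [M.inv p] hw2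
  have e3 : M.Pi [p, q, M.inv q] = M.Pi [p, M.Pi [q, M.inv q]] :=
    M.Pi_assoc [p] [q, M.inv q] [] h3
  have e4 : M.Pi [p, q, M.inv q] = M.Pi [M.Pi [p, q], M.inv q] :=
    M.Pi_assoc [] [p, q] [M.inv q] h3
  have e5 : M.Pi [p] = M.Pi [p, M.Pi []] := M.Pi_assoc [p] [] [] (M.mem_single p)
  have e6 : M.Pi [M.inv q] = M.Pi [M.Pi [], M.inv q] :=
    M.Pi_assoc [] [] [M.inv q] (M.mem_single _)
  have l : M.Pi [p, q, M.inv q] = p := by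
    rw [e3, (M.inv_pair_right q).2, ← e5, M.Pi_single]
  have r : M.Pi [p, q, M.inv q] = M.inv q := by
    rw [e4, h1, ← e6, M.Pi_single]
  rw [← l, r]

theorem inv_pi_triple {g a : L} (h : [M.inv g, a, g] ∈ M.D) :
    M.inv (M.Pi [M.inv g, a, g]) = M.Pi [M.inv g, M.inv a, g] := by
  have hw := M.mem_inv _ h
  have hp := M.Pi_inv _ h
  have e : (([M.inv g, a, g] : List L).reverse.map M.inv) ++ [M.inv g, a, g]
      = [M.inv g, M.inv a, g, M.inv g, a, g] := by simp [M.inv_inv]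
  rw [e] at hw hp
  have h1 : [M.Pi [M.inv g, M.inv a, g], M.inv g, a, g] ∈ M.D :=
    M.mem_assoc [] [M.inv g, M.inv a, g] [M.inv g, a, g] hw
  have e1 : M.Pi [M.inv g, M.inv a, g, M.inv g, a, g]
      = M.Pi [M.Pi [M.inv g, M.inv a, g], M.inv g, a, g] :=
    M.Pi_assoc [] [M.inv g, M.inv a, g] [M.inv g, a, g] hw
  have h2 : [M.Pi [M.inv g, M.inv a, g], M.Pi [M.inv g, a, g]] ∈ M.D :=
    M.mem_assoc [M.Pi [M.inv g, M.inv a, g]] [M.inv g, a, g] [] h1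
  have e2 : M.Pi [M.Pi [M.inv g, M.inv a, g], M.inv g, a, g]
      = M.Pi [M.Pi [M.inv g, M.inv a, g], M.Pi [M.inv g, a, g]] :=
    M.Pi_assoc [M.Pi [M.inv g, M.inv a, g]] [M.inv g, a, g] [] h1
  have hz : M.Pi [M.Pi [M.inv g, M.inv a, g], M.Pi [M.inv g, a, g]] = M.Pi [] := by
    rw [← e2, ← e1, hp]
  exact (M.pi_pair_eq_inv h2 hz).symm

end PartialGroupOn

end Basics

section Objlemmas

namespace PartialGroupOn

variable {L : Type u} (M : PartialGroupOn L)

theorem setConj_inv {X : Set L} {g : L} (hdef : M.setConjDef X g) :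
    M.setConjDef (M.setConj X g) (M.inv g) ∧ M.setConj (M.setConj X g) (M.inv g) = X := by
  constructor
  · rintro y ⟨x, hx, rfl⟩
    exact (M.conj_invol (hdef x hx)).1
  · ext z
    simp only [PartialGroupOn.setConj, Set.mem_setOf_eq]
    constructor
    · rintro ⟨y, ⟨x, hx, rfl⟩, rfl⟩
      rw [(M.conj_invol (hdef x hx)).2]; exact hx
    · intro hz
      exact ⟨M.conj z g, ⟨z, hz, rfl⟩, ((M.conj_invol (hdef z hz)).2).symm⟩

theorem norm_of_mem {Δ : Set (Set L)} (hobj : M.Objective Δ) {X : Set L} (hX : X ∈ Δ)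
    {x : L} (hx : x ∈ X) : M.setConjDef X x ∧ M.setConj X x = X := by
  obtain ⟨⟨hne, hinv, hcl⟩, hall⟩ := hobj.1 X hX
  have hxin : M.inv x ∈ X := hinv x hx
  have hxi2 : M.inv (M.inv x) ∈ X := by rw [M.inv_inv]; exact hx
  constructor
  · intro z hz
    exact hall [M.inv x, z, x] (by intro t ht; fin_cases ht <;> assumption)
  · ext z
    simp only [PartialGroupOn.setConj, Set.mem_setOf_eq]
    constructor
    · rintro ⟨w, hw, rfl⟩
      exact hcl [M.inv x, w, x] (by intro t ht; fin_cases ht <;> assumption)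
        (hall _ (by intro t ht; fin_cases ht <;> assumption))
    · intro hz
      have hmem : [M.inv (M.inv x), z, M.inv x] ∈ M.D :=
        hall _ (by intro t ht; fin_cases ht <;> assumption)
      refine ⟨M.Pi [M.inv (M.inv x), z, M.inv x],
        hcl _ (by intro t ht; fin_cases ht <;> assumption) hmem, ?_⟩
      have h2 := (M.conj_invol (g := M.inv x) hmem).2
      rw [M.inv_inv] at h2
      exact h2.symm

theorem mem_of_chain {Δ : Set (Set L)} (hobj : M.Objective Δ) {w : List L} {X : Set L}
    (h : M.viaChain Δ w X) : w ∈ M.D := by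
  rw [hobj.2.1]; exact ⟨X, h⟩

theorem conj_norm_aux {Δ : Set (Set L)} (hobj : M.Objective Δ) {X : Set L} (hX : X ∈ Δ)
    {g : L} (hdef : M.setConjDef X g) (hY : M.setConj X g ∈ Δ) :
    (∀ x ∈ M.normalizer X, [M.inv g, x, g] ∈ M.D) ∧
    (∀ x ∈ M.normalizer X, M.conj x g ∈ M.normalizer (M.setConj X g)) := by
  obtain ⟨hYd, hYX⟩ := M.setConj_inv hdef
  have part1 : ∀ x ∈ M.normalizer X, [M.inv g, x, g] ∈ M.D := by
    intro x hx
    have hx' : M.setConjDef X x ∧ M.setConj X x = X := hx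
    obtain ⟨hx1, hx2⟩ := hx'
    apply M.mem_of_chain hobj (X := M.setConj X g)
    simp only [PartialGroupOn.viaChain]
    simp only [hYX, hx2]
    exact ⟨hY, hYd, hX, hx1, hX, hdef, hY⟩
  refine ⟨part1, ?_⟩
  intro a ha
  have ha' : M.setConjDef X a ∧ M.setConj X a = X := ha
  obtain ⟨ha1, ha2⟩ := ha'
  have hai := M.setConj_inv (g := a) ha1
  rw [ha2] at hai
  obtain ⟨hai1, hai2⟩ := hai
  have key : ∀ x ∈ X, ([M.inv (M.conj a g), M.conj x g, M.conj a g] ∈ M.D) ∧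
      M.conj (M.conj x g) (M.conj a g) = M.conj (M.conj x a) g := by
    intro x hxX
    obtain ⟨hx1, hx2⟩ := M.norm_of_mem hobj hX hxX
    have hV : [M.inv g, M.inv a, g, M.inv g, x, g, M.inv g, a, g] ∈ M.D := by
      apply M.mem_of_chain hobj (X := M.setConj X g)
      simp only [PartialGroupOn.viaChain]
      simp only [hYX, hai2, hx2, ha2]
      exact ⟨hY, hYd, hX, hai1, hX, hdef, hY, hYd, hX, hx1, hX, hdef, hY, hYd, hX, ha1,
        hX, hdef, hY⟩
    have hS1 : [M.inv g, M.inv a, x, g, M.inv g, a, g] ∈ M.D := by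
      apply M.mem_of_chain hobj (X := M.setConj X g)
      simp only [PartialGroupOn.viaChain]
      simp only [hYX, hai2, hx2, ha2]
      exact ⟨hY, hYd, hX, hai1, hX, hx1, hX, hdef, hY, hYd, hX, ha1, hX, hdef, hY⟩
    have hS2 : [M.inv g, M.inv a, x, a, g] ∈ M.D := by
      apply M.mem_of_chain hobj (X := M.setConj X g)
      simp only [PartialGroupOn.viaChain]
      simp only [hYX, hai2, hx2, ha2]
      exact ⟨hY, hYd, hX, hai1, hX, hx1, hX, ha1, hX, hdef, hY⟩
    have hA1 : [M.inv g, M.inv a, g, M.Pi [M.inv g, x, g], M.inv g, a, g] ∈ M.D :=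
      M.mem_assoc [M.inv g, M.inv a, g] [M.inv g, x, g] [M.inv g, a, g] hV
    have eA1 : M.Pi [M.inv g, M.inv a, g, M.inv g, x, g, M.inv g, a, g]
        = M.Pi [M.inv g, M.inv a, g, M.Pi [M.inv g, x, g], M.inv g, a, g] :=
      M.Pi_assoc [M.inv g, M.inv a, g] [M.inv g, x, g] [M.inv g, a, g] hV
    have hA2 : [M.Pi [M.inv g, M.inv a, g], M.Pi [M.inv g, x, g], M.inv g, a, g] ∈ M.D :=
      M.mem_assoc [] [M.inv g, M.inv a, g] [M.Pi [M.inv g, x, g], M.inv g, a, g] hA1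
    have eA2 : M.Pi [M.inv g, M.inv a, g, M.Pi [M.inv g, x, g], M.inv g, a, g]
        = M.Pi [M.Pi [M.inv g, M.inv a, g], M.Pi [M.inv g, x, g], M.inv g, a, g] :=
      M.Pi_assoc [] [M.inv g, M.inv a, g] [M.Pi [M.inv g, x, g], M.inv g, a, g] hA1
    have hA3 : [M.Pi [M.inv g, M.inv a, g], M.Pi [M.inv g, x, g], M.Pi [M.inv g, a, g]]
        ∈ M.D :=
      M.mem_assoc [M.Pi [M.inv g, M.inv a, g], M.Pi [M.inv g, x, g]] [M.inv g, a, g] [] hA2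
    have eA3 : M.Pi [M.Pi [M.inv g, M.inv a, g], M.Pi [M.inv g, x, g], M.inv g, a, g]
        = M.Pi [M.Pi [M.inv g, M.inv a, g], M.Pi [M.inv g, x, g], M.Pi [M.inv g, a, g]] :=
      M.Pi_assoc [M.Pi [M.inv g, M.inv a, g], M.Pi [M.inv g, x, g]] [M.inv g, a, g] [] hA2
    have eB1 : M.Pi [M.inv g, M.inv a, g, M.inv g, x, g, M.inv g, a, g]
        = M.Pi [M.inv g, M.inv a, M.Pi [g, M.inv g], x, g, M.inv g, a, g] :=
      M.Pi_assoc [M.inv g, M.inv a] [g, M.inv g] [x, g, M.inv g, a, g] hV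
    have eB2 : M.Pi [M.inv g, M.inv a, x, g, M.inv g, a, g]
        = M.Pi [M.inv g, M.inv a, M.Pi [], x, g, M.inv g, a, g] :=
      M.Pi_assoc [M.inv g, M.inv a] [] [x, g, M.inv g, a, g] hS1
    have eC2 : M.Pi [M.inv g, M.inv a, x, g, M.inv g, a, g]
        = M.Pi [M.inv g, M.inv a, x, M.Pi [g, M.inv g], a, g] :=
      M.Pi_assoc [M.inv g, M.inv a, x] [g, M.inv g] [a, g] hS1
    have eC3 : M.Pi [M.inv g, M.inv a, x, a, g]
        = M.Pi [M.inv g, M.inv a, x, M.Pi [], a, g] :=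
      M.Pi_assoc [M.inv g, M.inv a, x] [] [a, g] hS2
    have eD : M.Pi [M.inv g, M.inv a, x, a, g]
        = M.Pi [M.inv g, M.Pi [M.inv a, x, a], g] :=
      M.Pi_assoc [M.inv g] [M.inv a, x, a] [g] hS2
    have hw3 : [M.inv g, a, g] ∈ M.D :=
      M.mem_append_right [M.inv g, M.inv a, g, M.inv g, x, g] [M.inv g, a, g] hV
    have veq : M.Pi [M.Pi [M.inv g, M.inv a, g], M.Pi [M.inv g, x, g], M.Pi [M.inv g, a, g]]
        = M.Pi [M.inv g, M.Pi [M.inv a, x, a], g] := by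
      rw [← eA3, ← eA2, ← eA1, eB1, (M.inv_pair_right g).2, ← eB2, eC2,
        (M.inv_pair_right g).2, ← eC3, eD]
    constructor
    · show [M.inv (M.Pi [M.inv g, a, g]), M.Pi [M.inv g, x, g], M.Pi [M.inv g, a, g]] ∈ M.D
      rw [M.inv_pi_triple hw3]
      exact hA3
    · show M.Pi [M.inv (M.Pi [M.inv g, a, g]), M.Pi [M.inv g, x, g], M.Pi [M.inv g, a, g]]
        = M.Pi [M.inv g, M.Pi [M.inv a, x, a], g]
      rw [M.inv_pi_triple hw3]
      exact veq
  have hdefc : M.setConjDef (M.setConj X g) (M.conj a g) := by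
    rintro y ⟨x, hxX, rfl⟩
    exact (key x hxX).1
  refine ⟨hdefc, ?_⟩
  ext z
  simp only [PartialGroupOn.setConj, Set.mem_setOf_eq]
  constructor
  · rintro ⟨y, ⟨x, hxX, rfl⟩, rfl⟩
    have hxa : M.conj x a ∈ X := by rw [← ha2]; exact ⟨x, hxX, rfl⟩
    exact ⟨M.conj x a, hxa, (key x hxX).2⟩
  · rintro ⟨x, hxX, rfl⟩
    have hxin : x ∈ M.setConj X a := by rw [ha2]; exact hxX
    obtain ⟨x', hx', hxe⟩ := hxin
    have h2 := (key x' hx').2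
    rw [← hxe] at h2
    exact ⟨M.conj x' g, ⟨x', hx', rfl⟩, h2.symm⟩

end PartialGroupOn

end Objlemmas

open PartialGroupOn

variable {L : Type u}

theorem conj_normalizer_iso (M : PartialGroupOn L) (Δ : Set (Set L))
    (hobj : M.Objective Δ) (X : Set L) (hX : X ∈ Δ) (g : L)
    (hdef : M.setConjDef X g) (hY : M.setConj X g ∈ Δ) :
    (∀ x ∈ M.normalizer X, x ∈ M.Dg g) ∧
    (∀ x ∈ M.normalizer X, M.conj x g ∈ M.normalizer (M.setConj X g)) ∧
    (∀ y ∈ M.normalizer (M.setConj X g),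
      ∃! x : L, x ∈ M.normalizer X ∧ M.conj x g = y) ∧
    (∀ a ∈ M.normalizer X, ∀ b ∈ M.normalizer X,
      [a, b] ∈ M.D ∧ [M.conj a g, M.conj b g] ∈ M.D ∧
        M.conj (M.Pi [a, b]) g = M.Pi [M.conj a g, M.conj b g]) := by
  obtain ⟨hYd, hYX⟩ := M.setConj_inv hdef
  have A := M.conj_norm_aux hobj hX hdef hY
  have hX' : M.setConj (M.setConj X g) (M.inv g) ∈ Δ := by rw [hYX]; exact hX
  have B := M.conj_norm_aux hobj hY hYd hX'
  rw [hYX] at B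
  refine ⟨fun x hx => A.1 x hx, A.2, ?_, ?_⟩
  · intro y hy
    refine ⟨M.conj y (M.inv g), ⟨B.2 y hy, ?_⟩, ?_⟩
    · have h := (M.conj_invol (g := M.inv g) (B.1 y hy)).2
      rw [M.inv_inv] at h
      exact h
    · rintro x' ⟨hx'n, hx'e⟩
      have h := (M.conj_invol (A.1 x' hx'n)).2
      rw [hx'e] at h
      exact h.symm
  · intro a ha b hb
    have ha' : M.setConjDef X a ∧ M.setConj X a = X := ha
    have hb' : M.setConjDef X b ∧ M.setConj X b = X := hb
    obtain ⟨ha1, ha2⟩ := ha'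
    obtain ⟨hb1, hb2⟩ := hb'
    have hag' : M.setConjDef (M.setConj X g) (M.conj a g) ∧
        M.setConj (M.setConj X g) (M.conj a g) = M.setConj X g := A.2 a ha
    have hbg' : M.setConjDef (M.setConj X g) (M.conj b g) ∧
        M.setConj (M.setConj X g) (M.conj b g) = M.setConj X g := A.2 b hb
    have hab : [a, b] ∈ M.D := by
      apply M.mem_of_chain hobj (X := X)
      simp only [PartialGroupOn.viaChain]
      simp only [ha2, hb2]
      exact ⟨hX, ha1, hX, hb1, hX⟩
    have hcab : [M.conj a g, M.conj b g] ∈ M.D := by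
      apply M.mem_of_chain hobj (X := M.setConj X g)
      simp only [PartialGroupOn.viaChain]
      simp only [hag'.2, hbg'.2]
      exact ⟨hY, hag'.1, hY, hbg'.1, hY⟩
    have hW2 : [M.inv g, a, b, g] ∈ M.D := by
      apply M.mem_of_chain hobj (X := M.setConj X g)
      simp only [PartialGroupOn.viaChain]
      simp only [hYX, ha2, hb2]
      exact ⟨hY, hYd, hX, ha1, hX, hb1, hX, hdef, hY⟩
    have hW3 : [M.inv g, a, g, M.inv g, b, g] ∈ M.D := by
      apply M.mem_of_chain hobj (X := M.setConj X g)
      simp only [PartialGroupOn.viaChain]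
      simp only [hYX, ha2, hb2]
      exact ⟨hY, hYd, hX, ha1, hX, hdef, hY, hYd, hX, hb1, hX, hdef, hY⟩
    refine ⟨hab, hcab, ?_⟩
    have e1 : M.Pi [M.inv g, a, b, g] = M.Pi [M.inv g, M.Pi [a, b], g] :=
      M.Pi_assoc [M.inv g] [a, b] [g] hW2
    have e2 : M.Pi [M.inv g, a, b, g] = M.Pi [M.inv g, a, M.Pi [], b, g] :=
      M.Pi_assoc [M.inv g, a] [] [b, g] hW2
    have e3 : M.Pi [M.inv g, a, g, M.inv g, b, g]
        = M.Pi [M.inv g, a, M.Pi [g, M.inv g], b, g] :=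
      M.Pi_assoc [M.inv g, a] [g, M.inv g] [b, g] hW3
    have e4 : M.Pi [M.inv g, a, g, M.inv g, b, g]
        = M.Pi [M.Pi [M.inv g, a, g], M.inv g, b, g] :=
      M.Pi_assoc [] [M.inv g, a, g] [M.inv g, b, g] hW3
    have h4 : [M.Pi [M.inv g, a, g], M.inv g, b, g] ∈ M.D :=
      M.mem_assoc [] [M.inv g, a, g] [M.inv g, b, g] hW3
    have e5 : M.Pi [M.Pi [M.inv g, a, g], M.inv g, b, g]
        = M.Pi [M.Pi [M.inv g, a, g], M.Pi [M.inv g, b, g]] :=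
      M.Pi_assoc [M.Pi [M.inv g, a, g]] [M.inv g, b, g] [] h4
    show M.Pi [M.inv g, M.Pi [a, b], g] = M.Pi [M.Pi [M.inv g, a, g], M.Pi [M.inv g, b, g]]
    rw [← e1, e2, ← (M.inv_pair_right g).2, ← e3, e4, e5]
end
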